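/- With τ*_N(σ_X², σ_Z²) defined as the solution of the fixed point equation λ((N−1)/N) E[Φ(((1−α)τ* − σ̃W)/σ_Z)] = α τ* (notation as above), for every fixed σ_Z² > 0 one has lim_{σ_X² → ∞} τ*_N = (λ/2)(1 − 1/N). -/

import Mathlib

open MeasureTheory ProbabilityTheory Filter

/-- The standard Gaussian CDF `Φ`. -/
noncomputable def stdGaussianCDF (x : ℝ) : ℝ :=
  (gaussianReal 0 1 (Set.Iic x)).toReal

open Real
open scoped NNReal

lemma stdG_nonneg (x : ℝ) : 0 ≤ stdGaussianCDF x := ENNReal.toReal_nonneg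

lemma stdG_le_one (x : ℝ) : stdGaussianCDF x ≤ 1 := by
  have h := prob_le_one (μ := gaussianReal 0 1) (s := Set.Iic x)
  simpa [stdGaussianCDF] using ENNReal.toReal_mono ENNReal.one_ne_top h

lemma stdG_mono : Monotone stdGaussianCDF := fun _ _ h =>
  ENNReal.toReal_mono (measure_ne_top _ _) (measure_mono (Set.Iic_subset_Iic.2 h))

lemma stdG_measurable : Measurable stdGaussianCDF := stdG_mono.measurable

lemma pdf_le_half (x : ℝ) : gaussianPDFReal 0 1 x ≤ 1/2 := by
  rw [gaussianPDFReal]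
  push_cast
  have h4 : √4 = 2 := by
    rw [show (4:ℝ) = 2^2 by norm_num, Real.sqrt_sq (by norm_num)]
  have h2 : (2:ℝ) ≤ √(2 * π * 1) := by
    rw [← h4]; exact Real.sqrt_le_sqrt (by nlinarith [Real.pi_gt_three])
  have hinv : (√(2 * π * 1))⁻¹ ≤ 1/2 := by
    rw [inv_le_comm₀ (by positivity) (by norm_num)]
    simpa using h2
  have hexp : rexp (- (x - 0)^2 / (2 * 1)) ≤ 1 := by
    rw [Real.exp_le_one_iff]
    have : (0:ℝ) ≤ (x-0)^2 := sq_nonneg _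
    nlinarith
  calc (√(2 * π * 1))⁻¹ * rexp (- (x - 0)^2 / (2*1)) ≤ (1/2) * 1 :=
        mul_le_mul hinv hexp (Real.exp_nonneg _) (by norm_num)
    _ = 1/2 := by norm_num

lemma stdG_lip {x y : ℝ} (h : y ≤ x) : stdGaussianCDF x - stdGaussianCDF y ≤ (x - y) / 2 := by
  have hsplit : (gaussianReal 0 1) (Set.Iic x) =
      (gaussianReal 0 1) (Set.Iic y) + (gaussianReal 0 1) (Set.Ioc y x) := by
    rw [← measure_union (by exact Set.Iic_disjoint_Ioc le_rfl) measurableSet_Ioc,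
      Set.Iic_union_Ioc_eq_Iic h]
  have hIoc : ((gaussianReal 0 1) (Set.Ioc y x)).toReal ≤ (x - y) / 2 := by
    have hle : (gaussianReal 0 1) (Set.Ioc y x) ≤ ENNReal.ofReal ((x - y)/2) := by
      rw [gaussianReal_apply 0 one_ne_zero]
      calc ∫⁻ u in Set.Ioc y x, gaussianPDF 0 1 u
          ≤ ∫⁻ _ in Set.Ioc y x, ENNReal.ofReal (1/2) := by
            refine setLIntegral_mono measurable_const fun u _ => ?_
            exact ENNReal.ofReal_le_ofReal (pdf_le_half u)
        _ = ENNReal.ofReal (1/2) * volume (Set.Ioc y x) := by rw [setLIntegral_const]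
        _ = ENNReal.ofReal (1/2) * ENNReal.ofReal (x - y) := by rw [Real.volume_Ioc]
        _ = ENNReal.ofReal ((x - y)/2) := by
            rw [← ENNReal.ofReal_mul (by norm_num)]; ring_nf
    exact ENNReal.toReal_le_of_le_ofReal (by linarith) hle
  have : stdGaussianCDF x = stdGaussianCDF y + ((gaussianReal 0 1) (Set.Ioc y x)).toReal := by
    rw [stdGaussianCDF, hsplit, ENNReal.toReal_add (measure_ne_top _ _) (measure_ne_top _ _)]
    rfl
  linarith

lemma stdG_abs_lip (x y : ℝ) : |stdGaussianCDF x - stdGaussianCDF y| ≤ |x - y| / 2 := by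
  rcases le_total y x with h | h
  · rw [abs_of_nonneg (sub_nonneg.2 (stdG_mono h)), abs_of_nonneg (sub_nonneg.2 h)]
    exact stdG_lip h
  · rw [abs_sub_comm, abs_sub_comm x y,
      abs_of_nonneg (sub_nonneg.2 (stdG_mono h)), abs_of_nonneg (sub_nonneg.2 h)]
    exact stdG_lip h

lemma gauss_map_neg (v : ℝ≥0) :
    (gaussianReal 0 v).map (fun u => -u) = gaussianReal 0 v := by
  have h := gaussianReal_map_const_mul (μ := 0) (v := v) (-1)
  have h1 : (fun u : ℝ => -u) = ((-1 : ℝ) * ·) := by funext u; ring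
  have h2 : (⟨(-1:ℝ)^2, sq_nonneg _⟩ : ℝ≥0) = 1 := by ext; norm_num
  rw [h1, h]
  rw [show NNReal.mk ((-1:ℝ)^2) (sq_nonneg _) = 1 from h2]
  norm_num

lemma integrable_stdG_comp (ν : Measure ℝ) [IsProbabilityMeasure ν] {g : ℝ → ℝ}
    (hg : Measurable g) : Integrable (fun u => stdGaussianCDF (g u)) ν := by
  refine Integrable.mono' (integrable_const 1)
    ((stdG_measurable.comp hg).aestronglyMeasurable) (ae_of_all _ fun u => ?_)
  rw [Real.norm_eq_abs, abs_le]
  exact ⟨by linarith [stdG_nonneg (g u)], stdG_le_one (g u)⟩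

lemma stdG_add_neg (x : ℝ) : stdGaussianCDF x + stdGaussianCDF (-x) = 1 := by
  have h1 : (gaussianReal 0 1) (Set.Iic (-x)) = (gaussianReal 0 1) (Set.Ici x) := by
    conv_lhs => rw [← gauss_map_neg 1]
    rw [Measure.map_apply measurable_neg measurableSet_Iic]
    congr 1; ext y; simp [neg_le]
  have hx : (gaussianReal 0 1) {x} = 0 :=
    gaussianReal_absolutelyContinuous 0 one_ne_zero Real.volume_singleton
  have hsum : (gaussianReal 0 1) (Set.Iic x) + (gaussianReal 0 1) (Set.Ici x) = 1 := by
    rw [← measure_union_add_inter (Set.Iic x) measurableSet_Ici,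
      Set.Iic_union_Ici, Set.Iic_inter_Ici, Set.Icc_self, hx, measure_univ, add_zero]
  rw [stdGaussianCDF, stdGaussianCDF, h1,
    ← ENNReal.toReal_add (measure_ne_top _ _) (measure_ne_top _ _), hsum, ENNReal.toReal_one]

lemma integral_stdG_neg (v : ℝ≥0) :
    ∫ u, stdGaussianCDF (-u) ∂(gaussianReal 0 v) = 1/2 := by
  have hsym : ∫ u, stdGaussianCDF u ∂(gaussianReal 0 v)
      = ∫ u, stdGaussianCDF (-u) ∂(gaussianReal 0 v) := by
    conv_lhs => rw [← gauss_map_neg v]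
    rw [integral_map measurable_neg.aemeasurable stdG_measurable.aestronglyMeasurable]
  have hsum : ∫ u, stdGaussianCDF u ∂(gaussianReal 0 v)
      + ∫ u, stdGaussianCDF (-u) ∂(gaussianReal 0 v) = 1 := by
    rw [← integral_add (integrable_stdG_comp _ (g := fun u => u) measurable_id)
      (integrable_stdG_comp _ measurable_neg)]
    have : (fun u => stdGaussianCDF u + stdGaussianCDF (-u)) = fun _ : ℝ => (1:ℝ) :=
      funext fun u => stdG_add_neg u
    rw [this, integral_const]
    simp
  linarith [hsym, hsum]

lemma key_bound (a b : ℝ) :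
    |(∫ w, stdGaussianCDF (a - b * w) ∂(gaussianReal 0 1)) - 1/2| ≤ |a| / 2 := by
  have hmap : (gaussianReal 0 1).map (b * ·)
      = gaussianReal 0 (⟨b^2, sq_nonneg b⟩ * 1) := by
    exact (gaussianReal_map_const_mul (μ := 0) (v := 1) b).trans (by rw [mul_zero]; rfl)
  have h1 : (∫ w, stdGaussianCDF (a - b * w) ∂(gaussianReal 0 1))
      = ∫ u, stdGaussianCDF (a - u) ∂(gaussianReal 0 (⟨b^2, sq_nonneg b⟩ * 1)) := by
    have hf : Measurable fun u : ℝ => stdGaussianCDF (a - u) :=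
      stdG_measurable.comp (measurable_const.sub measurable_id)
    rw [← hmap]
    exact (integral_map (f := fun u => stdGaussianCDF (a - u))
      (measurable_const_mul b).aemeasurable hf.aestronglyMeasurable).symm
  have hint1 : Integrable (fun u => stdGaussianCDF (a - u))
      (gaussianReal 0 (⟨b^2, sq_nonneg b⟩ * 1)) :=
    integrable_stdG_comp _ (measurable_const.sub measurable_id)
  have hint2 : Integrable (fun u => stdGaussianCDF (-u))
      (gaussianReal 0 (⟨b^2, sq_nonneg b⟩ * 1)) :=
    integrable_stdG_comp _ measurable_neg
  rw [h1, show (1/2:ℝ)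
      = ∫ u, stdGaussianCDF (-u) ∂(gaussianReal 0 (⟨b^2, sq_nonneg b⟩ * 1)) from
      (integral_stdG_neg _).symm,
    ← integral_sub hint1 hint2]
  calc |∫ u, (stdGaussianCDF (a - u) - stdGaussianCDF (-u))
        ∂(gaussianReal 0 (⟨b^2, sq_nonneg b⟩ * 1))|
      ≤ ∫ u, |stdGaussianCDF (a - u) - stdGaussianCDF (-u)|
        ∂(gaussianReal 0 (⟨b^2, sq_nonneg b⟩ * 1)) :=
        by simpa [Real.norm_eq_abs] using
          norm_integral_le_integral_norm (μ := gaussianReal 0 (⟨b^2, sq_nonneg b⟩ * 1))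
            (fun u => stdGaussianCDF (a - u) - stdGaussianCDF (-u))
    _ ≤ ∫ _, |a| / 2 ∂(gaussianReal 0 (⟨b^2, sq_nonneg b⟩ * 1)) := by
        refine integral_mono (hint1.sub hint2).abs (integrable_const _) fun u => ?_
        have := stdG_abs_lip (a - u) (-u)
        simpa using this
    _ = |a| / 2 := by simp

/-- Diffuse Gaussian prior limit: let `τ : ℝ → ℝ` assign to each prior variance
`s = σX² > 0` a solution `τ s = τ*_N` of the fixed point equation
`λ((N-1)/N) E[Φ(((1-α)τ* - σ̃W)/σ_Z)] = α τ*`, where `α = s/(s+σZ²)`, `σ̃² = α σZ²`,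
`W ~ N(0,1)`. Then `τ s → (λ/2)(1 - 1/N)` as `s = σX² → ∞`. -/
theorem stmt14 (σZ lam : ℝ) (hσZ : 0 < σZ) (hlam : 0 < lam)
    (N : ℕ) (hN : 2 ≤ N) (τ : ℝ → ℝ)
    (hfix : ∀ s : ℝ, 0 < s →
      lam * ((N - 1 : ℝ) / N) *
          ∫ w, stdGaussianCDF
              (((1 - s / (s + σZ ^ 2)) * τ s
                - Real.sqrt ((s / (s + σZ ^ 2)) * σZ ^ 2) * w) / σZ)
            ∂(gaussianReal 0 1)
        = (s / (s + σZ ^ 2)) * τ s) :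
    Tendsto τ atTop (nhds ((lam / 2) * (1 - 1 / N))) := by
  have hN2 : (2:ℝ) ≤ (N:ℝ) := by exact_mod_cast hN
  have hNpos : (0:ℝ) < N := by linarith
  set c : ℝ := ((N:ℝ) - 1) / N with hc_def
  have hc : 0 < c := div_pos (by linarith) hNpos
  set α : ℝ → ℝ := fun s => s / (s + σZ ^ 2) with hα_def
  set I : ℝ → ℝ := fun s => ∫ w, stdGaussianCDF
      (((1 - s / (s + σZ ^ 2)) * τ s
        - Real.sqrt ((s / (s + σZ ^ 2)) * σZ ^ 2) * w) / σZ)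
      ∂(gaussianReal 0 1) with hI_def
  have hσZ2 : 0 < σZ ^ 2 := by positivity
  -- basic facts for s > 0
  have hden : ∀ s : ℝ, 0 < s → 0 < s + σZ ^ 2 := fun s hs => by linarith
  have hαpos : ∀ s : ℝ, 0 < s → 0 < α s := fun s hs => div_pos hs (hden s hs)
  have hαle : ∀ s : ℝ, 0 < s → α s ≤ 1 := fun s hs => by
    rw [div_le_one (hden s hs)]; linarith
  have h1α : ∀ s : ℝ, 0 < s → 1 - α s = σZ ^ 2 / (s + σZ ^ 2) := by
    intro s hs
    have hne := (hden s hs).ne'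
    rw [hα_def]
    field_simp
    ring
  -- bounds on I
  have hI01 : ∀ s : ℝ, 0 < s → 0 ≤ I s ∧ I s ≤ 1 := by
    intro s hs
    constructor
    · exact integral_nonneg fun w => stdG_nonneg _
    · have hint : Integrable (fun w => stdGaussianCDF
          (((1 - s / (s + σZ ^ 2)) * τ s
            - Real.sqrt ((s / (s + σZ ^ 2)) * σZ ^ 2) * w) / σZ)) (gaussianReal 0 1) :=
        integrable_stdG_comp _ (by fun_prop)
      calc I s ≤ ∫ _, (1:ℝ) ∂(gaussianReal 0 1) :=
            integral_mono hint (integrable_const 1) fun w => stdG_le_one _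
        _ = 1 := by simp
  -- key estimate
  have hIest : ∀ s : ℝ, 0 < s → |I s - 1/2| ≤ |(1 - α s) * τ s / σZ| / 2 := by
    intro s hs
    have hrw : I s = ∫ w, stdGaussianCDF
        ((1 - α s) * τ s / σZ - (Real.sqrt ((s / (s + σZ ^ 2)) * σZ ^ 2) / σZ) * w)
        ∂(gaussianReal 0 1) := by
      simp only [hI_def, hα_def]
      refine integral_congr_ae (Filter.Eventually.of_forall fun w => ?_)
      congr 1
      ring
    rw [hrw]
    exact key_bound _ _
  -- equation facts
  have heq : ∀ s : ℝ, 0 < s → α s * τ s = lam * c * I s := fun s hs => (hfix s hs).symm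
  have hτ_nonneg : ∀ s : ℝ, 0 < s → 0 ≤ τ s := by
    intro s hs
    have h := heq s hs
    nlinarith [hαpos s hs, (hI01 s hs).1, mul_pos hlam hc]
  have hτ_bdd : ∀ s : ℝ, σZ ^ 2 ≤ s → 0 < s → τ s ≤ 2 * lam * c := by
    intro s hsge hs
    have hhalf : 1/2 ≤ α s := by
      rw [hα_def]
      rw [le_div_iff₀ (hden s hs)]
      linarith
    have h := heq s hs
    nlinarith [(hI01 s hs).2, hτ_nonneg s hs, mul_pos hlam hc]
  -- g → 0
  have hg1 : Tendsto (fun s : ℝ => σZ ^ 2 / (s + σZ ^ 2)) atTop (nhds 0) :=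
    Tendsto.div_atTop tendsto_const_nhds
      (tendsto_atTop_add_const_right _ _ tendsto_id)
  have hg0 : Tendsto (fun s => σZ ^ 2 / (s + σZ ^ 2) * (lam * c / σZ)) atTop (nhds 0) := by
    simpa using hg1.mul_const (lam * c / σZ)
  -- I → 1/2
  have hItend : Tendsto I atTop (nhds (1/2)) := by
    rw [tendsto_iff_dist_tendsto_zero]
    apply squeeze_zero' (Filter.Eventually.of_forall fun s => dist_nonneg) ?_ hg0
    filter_upwards [eventually_ge_atTop (max (σZ ^ 2) 1)] with s hs
    have hs1 : (1:ℝ) ≤ s := le_trans (le_max_right _ _) hs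
    have hspos : 0 < s := by linarith
    have hsge : σZ ^ 2 ≤ s := le_trans (le_max_left _ _) hs
    rw [Real.dist_eq]
    refine le_trans (hIest s hspos) ?_
    have h1 : |(1 - α s) * τ s / σZ| = (1 - α s) * τ s / σZ := by
      apply abs_of_nonneg
      apply div_nonneg _ hσZ.le
      exact mul_nonneg (by linarith [hαle s hspos]) (hτ_nonneg s hspos)
    rw [h1, h1α s hspos]
    have hq : (0:ℝ) ≤ σZ ^ 2 / (s + σZ ^ 2) := by positivity
    have hb := hτ_bdd s hsge hspos
    have h2 : σZ ^ 2 / (s + σZ ^ 2) * τ s ≤ σZ ^ 2 / (s + σZ ^ 2) * (2 * lam * c) :=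
      mul_le_mul_of_nonneg_left hb hq
    calc σZ ^ 2 / (s + σZ ^ 2) * τ s / σZ / 2
        = (σZ ^ 2 / (s + σZ ^ 2) * τ s) * (1 / (2 * σZ)) := by ring
      _ ≤ (σZ ^ 2 / (s + σZ ^ 2) * (2 * lam * c)) * (1 / (2 * σZ)) :=
          mul_le_mul_of_nonneg_right h2 (by positivity)
      _ = σZ ^ 2 / (s + σZ ^ 2) * (lam * c / σZ) := by
          field_simp
  -- α → 1
  have hαtend : Tendsto α atTop (nhds 1) := by
    have h1 : Tendsto (fun s : ℝ => 1 - σZ ^ 2 / (s + σZ ^ 2)) atTop (nhds 1) := by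
      simpa using tendsto_const_nhds.sub hg1
    refine h1.congr' ?_
    filter_upwards [eventually_gt_atTop 0] with s hs
    have := h1α s hs
    linarith
  -- conclusion
  have hmain : Tendsto (fun s => lam * c * I s / α s) atTop (nhds (lam * c * (1/2) / 1)) :=
    (Tendsto.mul tendsto_const_nhds hItend).div hαtend one_ne_zero
  have hev : (fun s => lam * c * I s / α s) =ᶠ[atTop] τ := by
    filter_upwards [eventually_gt_atTop 0] with s hs
    rw [div_eq_iff (hαpos s hs).ne', mul_comm (τ s) (α s)]
    exact (heq s hs).symm
  have hval : lam * c * (1/2) / 1 = (lam / 2) * (1 - 1 / (N:ℝ)) := by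
    have h : (1:ℝ) - 1 / (N:ℝ) = ((N:ℝ) - 1) / N := by
      field_simp
    rw [hc_def, h, div_one]
    ring
  rw [hval] at hmain
  exact hmain.congr' hev
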